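/- Let H be a real Hilbert space, d ≥ 1 an integer, C ⊆ H a nonempty closed convex set with ‖x − y‖ ≤ d for all x, y ∈ C, and T_1, …, T_N : C → C nonexpansive maps (N ≥ 2). Suppose ρ̂ : (0,∞) → (0,∞) satisfies: (a) ρ̂(ε') ≤ ε' for all ε' > 0, and (b) for every y ∈ C and ε' > 0, if ‖(T_N ∘ ⋯ ∘ T_1)(y) − y‖ < ρ̂(ε') then ‖T_i(y) − y‖ < ε' for all i ∈ {1,…,N}. Then for every x ∈ C, every ε > 0 and every k ∈ {1,…,N−1}: if ‖(T_{N−k} ∘ ⋯ ∘ T_1 ∘ T_N ∘ ⋯ ∘ T_{N−k+1})(x) − x‖ < ρ̂(ε/(2N+1)), then ‖T_i(x) − x‖ < ε for all i ∈ {1,…,N}. -/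

import Mathlib

open scoped RealInnerProductSpace

/-- `cyc N m` is the unique index in `{1, …, N}` congruent to `m` modulo `N`. -/
def cyc (N m : ℕ) : ℕ := if m % N = 0 then N else m % N

/-- `compShift T N s` is the composition `T [N+s] ∘ ⋯ ∘ T [1+s]`
(apply `T [1+s]` first, then `T [2+s]`, …, finally `T [N+s]`).  In particular
`compShift T N 0 = T N ∘ ⋯ ∘ T 1` and, for `1 ≤ k ≤ N−1`, `compShift T N (N−k)`
is the cyclic shift `T (N−k) ∘ ⋯ ∘ T 1 ∘ T N ∘ ⋯ ∘ T (N−k+1)`. -/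
def compShift {H : Type*} (T : ℕ → H → H) (N s : ℕ) (x : H) : H :=
  (List.range N).foldl (fun y j => T (cyc N (j + 1 + s)) y) x

namespace QSuzukiAux

variable {H : Type*}

/-- Fold a list of indices through `T`. -/
def comp (T : ℕ → H → H) (l : List ℕ) (x : H) : H :=
  l.foldl (fun y j => T j y) x

lemma comp_nil (T : ℕ → H → H) (x : H) : comp T [] x = x := rfl

lemma comp_cons (T : ℕ → H → H) (i : ℕ) (l : List ℕ) (x : H) :
    comp T (i :: l) x = comp T l (T i x) := rfl

lemma comp_append (T : ℕ → H → H) (l₁ l₂ : List ℕ) (x : H) :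
    comp T (l₁ ++ l₂) x = comp T l₂ (comp T l₁ x) :=
  List.foldl_append

lemma compShift_eq (T : ℕ → H → H) (N s : ℕ) (x : H) :
    compShift T N s x = comp T ((List.range N).map fun j => cyc N (j + 1 + s)) x := by
  simp [compShift, comp, List.foldl_map]

lemma cyc_eq_self {N m : ℕ} (h1 : 1 ≤ m) (h2 : m ≤ N) : cyc N m = m := by
  unfold cyc
  rcases eq_or_lt_of_le h2 with rfl | h
  · simp
  · rw [Nat.mod_eq_of_lt h, if_neg (by omega)]

lemma cyc_add_N (N m : ℕ) : cyc N (m + N) = cyc N m := by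
  simp [cyc, Nat.add_mod_right]

/-- Splitting of the shifted index list. -/
lemma list_split (N s : ℕ) (hs : s ≤ N) :
    ((List.range N).map fun j => cyc N (j + 1 + s)) =
      ((List.range (N - s)).map fun j => j + 1 + s) ++ ((List.range s).map fun j => j + 1) := by
  have hN : List.range N = List.range (N - s) ++ (List.range s).map (fun j => (N - s) + j) := by
    rw [← List.range_add]; congr 1; omega
  rw [hN, List.map_append, List.map_map]
  congr 1
  · refine List.map_congr_left fun j hj => ?_
    simp only [List.mem_range] at hj
    exact cyc_eq_self (by omega) (by omega)
  · refine List.map_congr_left fun j hj => ?_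
    simp only [List.mem_range, Function.comp] at hj ⊢
    have h1 : (N - s) + j + 1 + s = (j + 1) + N := by omega
    rw [h1, cyc_add_N]
    exact cyc_eq_self (by omega) (by omega)

/-- The unshifted index list. -/
lemma list_zero (N s : ℕ) (hs : s ≤ N) :
    ((List.range N).map fun j => cyc N (j + 1 + 0)) =
      ((List.range s).map fun j => j + 1) ++ ((List.range (N - s)).map fun j => j + 1 + s) := by
  have hN : List.range N = List.range s ++ (List.range (N - s)).map (fun j => s + j) := by
    rw [← List.range_add]; congr 1; omega
  rw [hN, List.map_append, List.map_map]
  congr 1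
  · refine List.map_congr_left fun j hj => ?_
    simp only [List.mem_range] at hj
    exact cyc_eq_self (by omega) (by omega)
  · refine List.map_congr_left fun j hj => ?_
    simp only [List.mem_range, Function.comp] at hj ⊢
    have h1 : s + j + 1 + 0 = j + 1 + s := by omega
    rw [h1]
    exact cyc_eq_self (by omega) (by omega)

section Norm

variable [NormedAddCommGroup H]
variable {C : Set H} {N : ℕ} {T : ℕ → H → H}
variable (hTm : ∀ i ∈ Finset.Icc 1 N, Set.MapsTo (T i) C C)
variable (hT : ∀ i ∈ Finset.Icc 1 N, ∀ x ∈ C, ∀ y ∈ C, ‖T i x - T i y‖ ≤ ‖x - y‖)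

include hTm in
lemma comp_mem (l : List ℕ) (hl : ∀ i ∈ l, i ∈ Finset.Icc 1 N) :
    ∀ x ∈ C, comp T l x ∈ C := by
  induction l with
  | nil => intro x hx; exact hx
  | cons i l ih =>
    intro x hx
    rw [comp_cons]
    exact ih (fun j hj => hl j (List.mem_cons_of_mem _ hj))
      _ (hTm i (hl i (List.mem_cons_self)) hx)

include hTm hT in
lemma comp_nonexp (l : List ℕ) (hl : ∀ i ∈ l, i ∈ Finset.Icc 1 N) :
    ∀ x ∈ C, ∀ y ∈ C, ‖comp T l x - comp T l y‖ ≤ ‖x - y‖ := by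
  induction l with
  | nil => intro x _ y _; exact le_refl _
  | cons i l ih =>
    intro x hx y hy
    rw [comp_cons, comp_cons]
    have hi : i ∈ Finset.Icc 1 N := hl i (List.mem_cons_self)
    have hl' : ∀ j ∈ l, j ∈ Finset.Icc 1 N := fun j hj => hl j (List.mem_cons_of_mem _ hj)
    calc ‖comp T l (T i x) - comp T l (T i y)‖
        ≤ ‖T i x - T i y‖ := ih hl' _ (hTm i hi hx) _ (hTm i hi hy)
      _ ≤ ‖x - y‖ := hT i hi x hx y hy

include hTm hT in
lemma comp_move (l : List ℕ) (hl : ∀ i ∈ l, i ∈ Finset.Icc 1 N) {ε' : ℝ}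
    (y : H) (hy : y ∈ C) (hmove : ∀ i ∈ l, ‖T i y - y‖ ≤ ε') :
    ‖comp T l y - y‖ ≤ l.length * ε' := by
  induction l with
  | nil => simp [comp_nil]
  | cons i l ih =>
    have hi : i ∈ Finset.Icc 1 N := hl i (List.mem_cons_self)
    have hl' : ∀ j ∈ l, j ∈ Finset.Icc 1 N := fun j hj => hl j (List.mem_cons_of_mem _ hj)
    have hmove' : ∀ j ∈ l, ‖T j y - y‖ ≤ ε' := fun j hj => hmove j (List.mem_cons_of_mem _ hj)
    rw [comp_cons]
    calc ‖comp T l (T i y) - y‖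
        ≤ ‖comp T l (T i y) - comp T l y‖ + ‖comp T l y - y‖ := norm_sub_le_norm_sub_add_norm_sub _ _ _
      _ ≤ ‖T i y - y‖ + l.length * ε' := by
          gcongr
          · exact comp_nonexp hTm hT l hl' _ (hTm i hi hy) _ hy
          · exact ih hl' hmove'
      _ ≤ ε' + l.length * ε' := by
          have := hmove i (List.mem_cons_self); linarith
      _ = (i :: l).length * ε' := by
          simp [List.length_cons]; ring

end Norm

end QSuzukiAux

open QSuzukiAux in
/-- Quantitative version of Suzuki's theorem: a modulus for the Bauschke condition for
one cyclic order yields one for all cyclic orders. -/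
theorem quantitative_suzuki
    {H : Type*} [NormedAddCommGroup H] [InnerProductSpace ℝ H] [CompleteSpace H]
    (d : ℕ) (hd : 1 ≤ d)
    (C : Set H) (hne : C.Nonempty) (hcl : IsClosed C) (hcv : Convex ℝ C)
    (hbd : ∀ x ∈ C, ∀ y ∈ C, ‖x - y‖ ≤ (d : ℝ))
    (N : ℕ) (hN : 2 ≤ N) (T : ℕ → H → H)
    (hTm : ∀ i ∈ Finset.Icc 1 N, Set.MapsTo (T i) C C)
    (hT : ∀ i ∈ Finset.Icc 1 N, ∀ x ∈ C, ∀ y ∈ C, ‖T i x - T i y‖ ≤ ‖x - y‖)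
    (ρ : ℝ → ℝ) (hρpos : ∀ ε' : ℝ, 0 < ε' → 0 < ρ ε')
    (hρle : ∀ ε' : ℝ, 0 < ε' → ρ ε' ≤ ε')
    (hρ : ∀ y ∈ C, ∀ ε' : ℝ, 0 < ε' → ‖compShift T N 0 y - y‖ < ρ ε' →
      ∀ i ∈ Finset.Icc 1 N, ‖T i y - y‖ < ε') :
    ∀ x ∈ C, ∀ ε : ℝ, 0 < ε → ∀ k ∈ Finset.Icc 1 (N - 1),
      ‖compShift T N (N - k) x - x‖ < ρ (ε / (2 * N + 1)) →
      ∀ i ∈ Finset.Icc 1 N, ‖T i x - x‖ < ε := by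
  intro x hx ε hε k hk hsmall i hi
  rw [Finset.mem_Icc] at hk
  set s : ℕ := N - k with hs_def
  have hs1 : 1 ≤ s := by omega
  have hsN : s ≤ N - 1 := by omega
  -- the two index lists
  set A : List ℕ := (List.range (N - s)).map fun j => j + 1 + s with hA_def
  set B : List ℕ := (List.range s).map fun j => j + 1 with hB_def
  have hAmem : ∀ i ∈ A, i ∈ Finset.Icc 1 N := by
    intro j hj
    simp only [hA_def, List.mem_map, List.mem_range] at hj
    obtain ⟨a, ha, rfl⟩ := hj
    rw [Finset.mem_Icc]; omega
  have hBmem : ∀ i ∈ B, i ∈ Finset.Icc 1 N := by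
    intro j hj
    simp only [hB_def, List.mem_map, List.mem_range] at hj
    obtain ⟨a, ha, rfl⟩ := hj
    rw [Finset.mem_Icc]; omega
  have hU : ∀ z : H, compShift T N s z = comp T B (comp T A z) := by
    intro z
    rw [compShift_eq, list_split N s (by omega), comp_append]
  have hS : ∀ z : H, compShift T N 0 z = comp T A (comp T B z) := by
    intro z
    rw [compShift_eq, list_zero N s (by omega), comp_append]
  set ε' : ℝ := ε / (2 * N + 1) with hε'_def
  have hNpos : (0:ℝ) < 2 * N + 1 := by positivity
  have hε' : 0 < ε' := by positivity
  -- the auxiliary point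
  set y : H := comp T A x with hy_def
  have hyC : y ∈ C := comp_mem hTm A hAmem x hx
  have hUxC : compShift T N s x ∈ C := by
    rw [hU]; exact comp_mem hTm B hBmem _ hyC
  -- ‖S y - y‖ ≤ ‖U x - x‖ < ρ ε'
  have hSy : ‖compShift T N 0 y - y‖ < ρ ε' := by
    have : compShift T N 0 y = comp T A (compShift T N s x) := by
      rw [hS, hU]
    rw [this, hy_def]
    calc ‖comp T A (compShift T N s x) - comp T A x‖
        ≤ ‖compShift T N s x - x‖ := comp_nonexp hTm hT A hAmem _ hUxC _ hx
      _ < ρ ε' := hsmall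
  have hmove : ∀ i ∈ Finset.Icc 1 N, ‖T i y - y‖ < ε' := hρ y hyC ε' hε' hSy
  -- ‖U x - y‖ = ‖comp B y - y‖ ≤ s * ε'
  have hBy : ‖comp T B y - y‖ ≤ (s : ℝ) * ε' := by
    have hlen : (B.length : ℝ) = (s : ℝ) := by simp [hB_def]
    have := comp_move hTm hT B hBmem y hyC
      (fun j hj => le_of_lt (hmove j (hBmem j hj)))
    rwa [hlen] at this
  -- ‖x - y‖ < (s+1) ε'
  have hxy : ‖x - y‖ < ((s : ℝ) + 1) * ε' := by
    have h1 : ‖x - compShift T N s x‖ < ε' :=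
      lt_of_lt_of_le (by rwa [norm_sub_rev]) (hρle ε' hε')
    have h2 : compShift T N s x = comp T B y := by rw [hU]
    calc ‖x - y‖ ≤ ‖x - compShift T N s x‖ + ‖compShift T N s x - y‖ :=
          norm_sub_le_norm_sub_add_norm_sub _ _ _
      _ < ε' + (s : ℝ) * ε' := by
          have h1' : ‖x - comp T B y‖ < ε' := by rw [← h2]; exact h1
          rw [h2]
          exact add_lt_add_of_lt_of_le h1' hBy
      _ = ((s : ℝ) + 1) * ε' := by ring
  -- conclude
  have hTi : ‖T i x - T i y‖ ≤ ‖x - y‖ := hT i hi x hx y hyC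
  have hiy : ‖T i y - y‖ < ε' := hmove i hi
  have hsle : (s : ℝ) ≤ (N : ℝ) - 1 := by
    have : (s : ℝ) + 1 ≤ (N : ℝ) := by exact_mod_cast Nat.add_le_of_le_sub (by omega) hsN |>.trans (le_refl N) |>.trans_eq rfl
    linarith
  calc ‖T i x - x‖ ≤ ‖T i x - T i y‖ + ‖T i y - y‖ + ‖y - x‖ := by
        have := norm_sub_le_norm_sub_add_norm_sub (T i x) (T i y) x
        have h2 := norm_sub_le_norm_sub_add_norm_sub (T i y) y x
        calc ‖T i x - x‖ ≤ ‖T i x - T i y‖ + ‖T i y - x‖ := this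
          _ ≤ ‖T i x - T i y‖ + (‖T i y - y‖ + ‖y - x‖) := by linarith
          _ = _ := by ring
    _ < ((s : ℝ) + 1) * ε' + ε' + ((s : ℝ) + 1) * ε' := by
        rw [norm_sub_rev y x]
        have := lt_of_le_of_lt hTi hxy
        linarith
    _ = (2 * (s : ℝ) + 3) * ε' := by ring
    _ ≤ (2 * (N : ℝ) + 1) * ε' := by nlinarith
    _ = ε := by rw [hε'_def]; field_simp [hNpos.ne']
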